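/- Let F be an algebra of partial functions. Then F admits a complete representation by partial functions if and only if F is atomic and composition in F is completely left-distributive over joins. -/
import Mathlib


/-! Algebras of partial functions: basic definitions. -/

namespace PFAlg

variable {X Y : Type*}

/-- `f ⊆ X × X` is a partial function. -/
def IsPF (f : Set (X × X)) : Prop :=
  ∀ ⦃x y z : X⦄, (x, y) ∈ f → (x, z) ∈ f → y = z

/-- Composition of partial functions (binary relations), written left-to-right:
`f ∘ g = {(x,z) : ∃ y, (x,y) ∈ f and (y,z) ∈ g}`. -/
def comp (f g : Set (X × X)) : Set (X × X) :=
  {p | ∃ y, (p.1, y) ∈ f ∧ (y, p.2) ∈ g}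

/-- Antidomain: the diagonal of the set of points where `f` is undefined. -/
def adom (f : Set (X × X)) : Set (X × X) :=
  {p | p.1 = p.2 ∧ ∀ y, (p.1, y) ∉ f}

/-- An algebra of partial functions on the base `X`: a nonempty collection of
partial functions closed under composition, intersection and antidomain. -/
structure IsPFAlgebra (F : Set (Set (X × X))) : Prop where
  nonempty : F.Nonempty
  pf : ∀ f ∈ F, IsPF f
  comp_mem : ∀ f ∈ F, ∀ g ∈ F, comp f g ∈ F
  inter_mem : ∀ f ∈ F, ∀ g ∈ F, f ∩ g ∈ F
  adom_mem : ∀ f ∈ F, adom f ∈ F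

/-- `m` is the supremum of `S` in the poset `(F, ⊆)`. -/
def IsLUBIn (F S : Set (Set (X × X))) (m : Set (X × X)) : Prop :=
  m ∈ F ∧ (∀ s ∈ S, s ⊆ m) ∧ ∀ c ∈ F, (∀ s ∈ S, s ⊆ c) → m ⊆ c

/-- `m` is the infimum of `S` in the poset `(F, ⊆)`. -/
def IsGLBIn (F S : Set (Set (X × X))) (m : Set (X × X)) : Prop :=
  m ∈ F ∧ (∀ s ∈ S, m ⊆ s) ∧ ∀ c ∈ F, (∀ s ∈ S, c ⊆ s) → c ⊆ m

/-- `b` is an atom of `F`: a minimal element of `F \ {∅}`. -/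
def IsAtomOf (F : Set (Set (X × X))) (b : Set (X × X)) : Prop :=
  b ∈ F ∧ b ≠ ∅ ∧ ∀ g ∈ F, g ≠ ∅ → g ⊆ b → g = b

/-- `F` is atomic: every nonempty member contains an atom. -/
def Atomic (F : Set (Set (X × X))) : Prop :=
  ∀ f ∈ F, f ≠ ∅ → ∃ b, IsAtomOf F b ∧ b ⊆ f

/-- A representation of `F` by partial functions over the base `Y`. -/
structure IsRep (F : Set (Set (X × X))) (θ : Set (X × X) → Set (Y × Y)) : Prop where
  injOn : Set.InjOn θ F
  pf : ∀ f ∈ F, IsPF (θ f)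
  comp_eq : ∀ f ∈ F, ∀ g ∈ F, θ (comp f g) = comp (θ f) (θ g)
  inter_eq : ∀ f ∈ F, ∀ g ∈ F, θ (f ∩ g) = θ f ∩ θ g
  adom_eq : ∀ f ∈ F, θ (adom f) = adom (θ f)

/-- `θ` is meet complete: it turns existing infima of nonempty subsets into intersections. -/
def MeetComplete (F : Set (Set (X × X))) (θ : Set (X × X) → Set (Y × Y)) : Prop :=
  ∀ S ⊆ F, S.Nonempty → ∀ m, IsGLBIn F S m → θ m = ⋂ s ∈ S, θ s

/-- `θ` is join complete: it turns existing suprema into unions. -/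
def JoinComplete (F : Set (Set (X × X))) (θ : Set (X × X) → Set (Y × Y)) : Prop :=
  ∀ S ⊆ F, ∀ m, IsLUBIn F S m → θ m = ⋃ s ∈ S, θ s

/-- `θ` is an atomic representation. -/
def AtomicRep (F : Set (Set (X × X))) (θ : Set (X × X) → Set (Y × Y)) : Prop :=
  ∀ f ∈ F, ∀ p ∈ θ f, ∃ b, IsAtomOf F b ∧ p ∈ θ b

/-- Composition in `F` is completely left-distributive over joins. -/
def CompLeftDistribJoins (F : Set (Set (X × X))) : Prop :=
  ∀ a ∈ F, ∀ S ⊆ F, ∀ m, IsLUBIn F S m → IsLUBIn F ((fun s => comp a s) '' S) (comp a m)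

/-- Composition in `F` is completely left-distributive over meets. -/
def CompLeftDistribMeets (F : Set (Set (X × X))) : Prop :=
  ∀ a ∈ F, ∀ S ⊆ F, S.Nonempty → ∀ m, IsGLBIn F S m →
    IsGLBIn F ((fun s => comp a s) '' S) (comp a m)

end PFAlg
namespace PFAlg

variable {X : Type*}

theorem comp_assoc' (f g h : Set (X × X)) : comp (comp f g) h = comp f (comp g h) := by
  ext ⟨x, z⟩
  constructor
  · rintro ⟨y, ⟨w, hw1, hw2⟩, hy⟩; exact ⟨w, hw1, y, hw2, hy⟩
  · rintro ⟨w, hw, y, hy1, hy2⟩; exact ⟨y, ⟨w, hw, hy1⟩, hy2⟩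

theorem comp_empty' (f : Set (X × X)) : comp f (∅ : Set (X × X)) = ∅ := by
  ext ⟨x, z⟩; simp [comp]

theorem empty_comp' (f : Set (X × X)) : comp (∅ : Set (X × X)) f = ∅ := by
  ext ⟨x, z⟩; simp [comp]

theorem comp_mono_right {s t : Set (X × X)} (a : Set (X × X)) (h : s ⊆ t) :
    comp a s ⊆ comp a t := by
  rintro ⟨x, z⟩ ⟨y, h1, h2⟩; exact ⟨y, h1, h h2⟩

theorem adom_comp_self (f : Set (X × X)) : comp (adom f) f = ∅ := by
  ext ⟨x, z⟩
  simp only [Set.mem_empty_iff_false, iff_false]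
  rintro ⟨y, ⟨h1, hy⟩, hz⟩
  have h1' : x = y := h1
  subst h1'
  exact hy z hz

theorem empty_mem {F : Set (Set (X × X))} (hF : IsPFAlgebra F) : (∅ : Set (X × X)) ∈ F := by
  obtain ⟨f, hf⟩ := hF.nonempty
  have := hF.comp_mem _ (hF.adom_mem f hf) f hf
  rwa [adom_comp_self] at this

theorem comp_adom_inter {f : Set (X × X)} (hf : IsPF f) (g : Set (X × X)) :
    comp (adom (f ∩ g)) f = f \ g := by
  ext ⟨x, z⟩
  constructor
  · rintro ⟨y, ⟨h1, hy⟩, hz⟩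
    have h1' : x = y := h1
    subst h1'
    exact ⟨hz, fun hg => hy z ⟨hz, hg⟩⟩
  · rintro ⟨hz, hg⟩
    refine ⟨x, ⟨rfl, fun w hw => ?_⟩, hz⟩
    exact hg (hf hw.1 hz ▸ hw.2)

theorem diff_mem {F : Set (Set (X × X))} (hF : IsPFAlgebra F) {f g : Set (X × X)}
    (hf : f ∈ F) (hg : g ∈ F) : f \ g ∈ F := by
  rw [← comp_adom_inter (hF.pf f hf) g]
  exact hF.comp_mem _ (hF.adom_mem _ (hF.inter_mem f hf g hg)) f hf

theorem comp_inter_of_pf {a : Set (X × X)} (ha : IsPF a) (f g : Set (X × X)) :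
    comp a (f ∩ g) = comp a f ∩ comp a g := by
  ext ⟨x, z⟩
  constructor
  · rintro ⟨y, h1, h2, h3⟩; exact ⟨⟨y, h1, h2⟩, ⟨y, h1, h3⟩⟩
  · rintro ⟨⟨y, h1, h2⟩, ⟨y', h1', h2'⟩⟩
    exact ⟨y, h1, h2, ha h1' h1 ▸ h2'⟩

theorem mem_domdiag {g : Set (X × X)} {x z : X} :
    (x, z) ∈ adom (adom g) ↔ x = z ∧ ∃ w, (x, w) ∈ g := by
  simp only [adom, Set.mem_setOf_eq]
  constructor
  · rintro ⟨rfl, h⟩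
    refine ⟨rfl, ?_⟩
    by_contra h'
    push_neg at h'
    exact h x ⟨rfl, h'⟩
  · rintro ⟨rfl, w, hw⟩
    exact ⟨rfl, fun y hy => hy.2 w hw⟩

theorem domdiag_comp {g h : Set (X × X)} (hh : IsPF h) (hsub : g ⊆ h) :
    comp (adom (adom g)) h = g := by
  ext ⟨x, z⟩
  constructor
  · rintro ⟨y, hd, hyz⟩
    obtain ⟨rfl, w, hw⟩ := mem_domdiag.mp hd
    have hzw : z = w := hh hyz (hsub hw)
    subst hzw
    exact hw
  · intro hg
    exact ⟨x, mem_domdiag.mpr ⟨rfl, z, hg⟩, hsub hg⟩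

theorem atom_comp_atom {F : Set (Set (X × X))} (hF : IsPFAlgebra F) {a f : Set (X × X)}
    (ha : IsAtomOf F a) (hfF : f ∈ F) (hne : comp a f ≠ ∅) : IsAtomOf F (comp a f) := by
  refine ⟨hF.comp_mem a ha.1 f hfF, hne, ?_⟩
  intro g hg hgne hgsub
  have hDa : comp (adom (adom g)) a ∈ F :=
    hF.comp_mem _ (hF.adom_mem _ (hF.adom_mem g hg)) a ha.1
  have hsub_a : comp (adom (adom g)) a ⊆ a := by
    rintro ⟨x, y⟩ ⟨w, hd, hwy⟩
    obtain ⟨rfl, -⟩ := mem_domdiag.mp hd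
    exact hwy
  have hne' : comp (adom (adom g)) a ≠ ∅ := by
    obtain ⟨⟨x, w⟩, hxw⟩ := Set.nonempty_iff_ne_empty.mpr hgne
    obtain ⟨y, hxy, -⟩ := hgsub hxw
    exact Set.nonempty_iff_ne_empty.mp ⟨(x, y), x, mem_domdiag.mpr ⟨rfl, w, hxw⟩, hxy⟩
  have heq := ha.2.2 _ hDa hne' hsub_a
  calc g = comp (adom (adom g)) (comp a f) :=
        (domdiag_comp (hF.pf _ (hF.comp_mem a ha.1 f hfF)) hgsub).symm
    _ = comp (comp (adom (adom g)) a) f := (comp_assoc' _ _ _).symm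
    _ = comp a f := by rw [heq]

theorem atom_total {F : Set (Set (X × X))} (hF : IsPFAlgebra F) {a f : Set (X × X)}
    (ha : IsAtomOf F a) (hfF : f ∈ F) (hne : comp a f ≠ ∅) :
    ∀ x y, (x, y) ∈ a → ∃ z, (y, z) ∈ f := by
  have hDa : comp (adom (adom (comp a f))) a ∈ F :=
    hF.comp_mem _ (hF.adom_mem _ (hF.adom_mem _ (hF.comp_mem a ha.1 f hfF))) a ha.1
  have hsub_a : comp (adom (adom (comp a f))) a ⊆ a := by
    rintro ⟨x, y⟩ ⟨w, hd, hwy⟩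
    obtain ⟨rfl, -⟩ := mem_domdiag.mp hd
    exact hwy
  have hne' : comp (adom (adom (comp a f))) a ≠ ∅ := by
    obtain ⟨⟨x, z⟩, hxz⟩ := Set.nonempty_iff_ne_empty.mpr hne
    obtain ⟨y, hxy, -⟩ := id hxz
    exact Set.nonempty_iff_ne_empty.mp ⟨(x, y), x, mem_domdiag.mpr ⟨rfl, z, hxz⟩, hxy⟩
  have heq := ha.2.2 _ hDa hne' hsub_a
  intro x y hxy
  rw [← heq] at hxy
  obtain ⟨w, hd, hwy⟩ := hxy
  obtain ⟨rfl, z, hz⟩ := mem_domdiag.mp hd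
  obtain ⟨y₂, hxy₂, hy₂z⟩ := hz
  have : y₂ = y := hF.pf a ha.1 hxy₂ hwy
  subst this
  exact ⟨z, hy₂z⟩

theorem atom_adom_iff {F : Set (Set (X × X))} (hF : IsPFAlgebra F) {a f : Set (X × X)}
    (ha : IsAtomOf F a) (hfF : f ∈ F) : comp a (adom f) ≠ ∅ ↔ comp a f = ∅ := by
  constructor
  · intro h
    have hsub : comp a (adom f) ⊆ a := by
      rintro ⟨x, z⟩ ⟨y, hxy, h1, -⟩
      have h1' : y = z := h1
      subst h1'
      exact hxy
    have heq := ha.2.2 _ (hF.comp_mem a ha.1 _ (hF.adom_mem f hfF)) h hsub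
    rw [Set.eq_empty_iff_forall_notMem]
    rintro ⟨x, z⟩ ⟨y, hxy, hyz⟩
    rw [← heq] at hxy
    obtain ⟨w, hxw, hw⟩ := hxy
    have h1 : w = y := hw.1
    have h2 : ∀ v, (w, v) ∉ f := hw.2
    subst h1
    exact h2 z hyz
  · intro h
    obtain ⟨⟨x, y⟩, hxy⟩ := Set.nonempty_iff_ne_empty.mpr ha.2.1
    have hy : ∀ z, (y, z) ∉ f := fun z hz =>
      (Set.eq_empty_iff_forall_notMem.mp h (x, z)) ⟨y, hxy, hz⟩
    exact Set.nonempty_iff_ne_empty.mp ⟨(x, y), y, hxy, rfl, hy⟩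

end PFAlg

namespace PFAlg

variable {X : Type*}

theorem comp_iUnion {ι : Sort*} (a : Set (X × X)) (s : ι → Set (X × X)) :
    comp a (⋃ i, s i) = ⋃ i, comp a (s i) := by
  ext ⟨x, z⟩
  constructor
  · rintro ⟨y, h1, h2⟩
    obtain ⟨i, hi⟩ := Set.mem_iUnion.mp h2
    exact Set.mem_iUnion.mpr ⟨i, y, h1, hi⟩
  · intro h
    obtain ⟨i, y, h1, h2⟩ := Set.mem_iUnion.mp h
    exact ⟨y, h1, Set.mem_iUnion.mpr ⟨i, h2⟩⟩

theorem rep_forward {X : Type*} {Z : Type*} {F : Set (Set (X × X))} (hF : IsPFAlgebra F)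
    (θ : Set (X × X) → Set (Z × Z)) (hrep : IsRep F θ) (hJ : JoinComplete F θ) :
    Atomic F ∧ CompLeftDistribJoins F := by
  have h0 : (∅ : Set (X × X)) ∈ F := empty_mem hF
  have hθ0 : θ ∅ = ∅ := by
    have := hJ ∅ (Set.empty_subset F) ∅
      ⟨h0, fun s hs => absurd hs (Set.notMem_empty s), fun c hc _ => Set.empty_subset c⟩
    simpa using this
  have hmono : ∀ f ∈ F, ∀ g ∈ F, f ⊆ g → θ f ⊆ θ g := by
    intro f hf g hg hfg
    have h1 : f ∩ g = f := Set.inter_eq_left.mpr hfg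
    have h2 : θ f = θ f ∩ θ g := by rw [← hrep.inter_eq f hf g hg, h1]
    rw [h2]; exact Set.inter_subset_right
  have hrefl : ∀ f ∈ F, ∀ g ∈ F, θ f ⊆ θ g → f ⊆ g := by
    intro f hf g hg hθfg
    have h1 : θ f = θ (f ∩ g) := by
      rw [hrep.inter_eq f hf g hg]
      exact (Set.inter_eq_left.mpr hθfg).symm
    have h2 : f = f ∩ g := hrep.injOn hf (hF.inter_mem f hf g hg) h1
    rw [h2]; exact Set.inter_subset_right
  constructor
  · -- Atomic
    intro f hf hfne
    have hθfne : θ f ≠ ∅ := fun h => hfne (hrep.injOn hf h0 (h.trans hθ0.symm))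
    obtain ⟨p, hp⟩ := Set.nonempty_iff_ne_empty.mpr hθfne
    by_cases hlub : ∀ c ∈ F, (∀ g ∈ {g | g ∈ F ∧ g ⊆ f ∧ p ∉ θ g}, g ⊆ c) → f ⊆ c
    · exfalso
      have hS : {g | g ∈ F ∧ g ⊆ f ∧ p ∉ θ g} ⊆ F := fun g hg => hg.1
      have := hJ _ hS f ⟨hf, fun g hg => hg.2.1, hlub⟩
      rw [this] at hp
      obtain ⟨g, hg, hpg⟩ := Set.mem_iUnion₂.mp hp
      exact hg.2.2 hpg
    · push_neg at hlub
      obtain ⟨c, hcF, hcUB, hfc⟩ := hlub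
      have hc'F : c ∩ f ∈ F := hF.inter_mem c hcF f hf
      have hbF : f \ (c ∩ f) ∈ F := diff_mem hF hf hc'F
      have hbne : f \ (c ∩ f) ≠ ∅ := by
        obtain ⟨q, hqf, hqc⟩ := Set.not_subset.mp hfc
        exact Set.nonempty_iff_ne_empty.mp ⟨q, hqf, fun h => hqc h.1⟩
      have hkey : ∀ g ∈ F, g ≠ ∅ → g ⊆ f \ (c ∩ f) → p ∈ θ g := by
        intro g hg hgne hgsub
        by_contra hpg
        have hgS : g ∈ {g | g ∈ F ∧ g ⊆ f ∧ p ∉ θ g} :=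
          ⟨hg, hgsub.trans Set.diff_subset, hpg⟩
        have hgc : g ⊆ c ∩ f := fun q hq => ⟨hcUB g hgS hq, (hgsub hq).1⟩
        obtain ⟨q, hq⟩ := Set.nonempty_iff_ne_empty.mpr hgne
        exact (hgsub hq).2 (hgc hq)
      refine ⟨f \ (c ∩ f), ⟨hbF, hbne, ?_⟩, Set.diff_subset⟩
      intro g hg hgne hgsub
      by_contra hgneq
      have hhne : (f \ (c ∩ f)) \ g ≠ ∅ := by
        intro h
        exact hgneq (Set.Subset.antisymm hgsub (Set.diff_eq_empty.mp h))
      have hhF : (f \ (c ∩ f)) \ g ∈ F := diff_mem hF hbF hg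
      have hp1 := hkey g hg hgne hgsub
      have hp2 := hkey _ hhF hhne Set.diff_subset
      have hdisj : g ∩ ((f \ (c ∩ f)) \ g) = ∅ := by
        ext q
        constructor
        · rintro ⟨h1, -, h2⟩
          exact absurd h1 h2
        · intro h
          exact absurd h (Set.notMem_empty q)
      have : θ g ∩ θ ((f \ (c ∩ f)) \ g) = θ ∅ := by
        rw [← hrep.inter_eq g hg _ hhF, hdisj]
      have := this ▸ Set.mem_inter hp1 hp2
      rw [hθ0] at this
      exact this
  · -- CompLeftDistribJoins
    intro a ha S hS m hm
    refine ⟨hF.comp_mem a ha m hm.1, ?_, ?_⟩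
    · rintro t ⟨s, hs, rfl⟩
      exact comp_mono_right a (hm.2.1 s hs)
    · intro c hc hcUB
      apply hrefl _ (hF.comp_mem a ha m hm.1) c hc
      rw [hrep.comp_eq a ha m hm.1, hJ S hS m hm]
      rintro ⟨x, z⟩ ⟨y, hxy, hyz⟩
      obtain ⟨s, hs, hyzs⟩ := Set.mem_iUnion₂.mp hyz
      have h1 : (x, z) ∈ θ (comp a s) := by
        rw [hrep.comp_eq a ha s (hS hs)]
        exact ⟨y, hxy, hyzs⟩
      exact hmono _ (hF.comp_mem a ha s (hS hs)) c hc (hcUB _ ⟨s, hs, rfl⟩) h1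

end PFAlg

namespace PFAlg

variable {X : Type*}

/-- The representation of `F` over the base of atoms of `F`. -/
def theta (F : Set (Set (X × X))) (f : Set (X × X)) :
    Set ({b : Set (X × X) // IsAtomOf F b} × {b : Set (X × X) // IsAtomOf F b}) :=
  {p | comp p.1.val f = p.2.val}

theorem theta_mono {F : Set (Set (X × X))} (hF : IsPFAlgebra F) {f g : Set (X × X)}
    (hg : g ∈ F) (hfg : f ⊆ g) : theta F f ⊆ theta F g := by
  rintro ⟨a, b⟩ hp
  have hp' : comp a.val f = b.val := hp
  have h1 : b.val ⊆ comp a.val g := by rw [← hp']; exact comp_mono_right a.val hfg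
  have h2 : comp a.val g ≠ ∅ := fun h => b.2.2.1 (Set.subset_empty_iff.mp (h ▸ h1))
  show comp a.val g = b.val
  exact ((atom_comp_atom hF a.2 hg h2).2.2 b.val b.2.1 b.2.2.1 h1).symm

theorem comp_adom_subset (a f : Set (X × X)) : comp a (adom f) ⊆ a := by
  rintro ⟨x, z⟩ ⟨y, hxy, h1, -⟩
  have h1' : y = z := h1
  subst h1'
  exact hxy

theorem theta_inj_half {F : Set (Set (X × X))} (hF : IsPFAlgebra F) (hAt : Atomic F)
    {f g : Set (X × X)} (hf : f ∈ F) (hg : g ∈ F) (hθ : theta F f = theta F g) :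
    f \ g = ∅ := by
  by_contra hne
  have hdF : f \ g ∈ F := diff_mem hF hf hg
  have hDdF : adom (adom (f \ g)) ∈ F := hF.adom_mem _ (hF.adom_mem _ hdF)
  obtain ⟨⟨x, w⟩, hxw⟩ := Set.nonempty_iff_ne_empty.mpr hne
  have hDdne : adom (adom (f \ g)) ≠ ∅ :=
    Set.nonempty_iff_ne_empty.mp ⟨(x, x), mem_domdiag.mpr ⟨rfl, w, hxw⟩⟩
  obtain ⟨e, heAtom, hesub⟩ := hAt _ hDdF hDdne
  obtain ⟨⟨x₀, x₁⟩, hx⟩ := Set.nonempty_iff_ne_empty.mpr heAtom.2.1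
  obtain ⟨heq01, w₀, hw₀⟩ := mem_domdiag.mp (hesub hx)
  subst heq01
  have hcehne : comp e (f \ g) ≠ ∅ :=
    Set.nonempty_iff_ne_empty.mp ⟨(x₀, w₀), x₀, hx, hw₀⟩
  have hcehF : comp e (f \ g) ∈ F := hF.comp_mem e heAtom.1 _ hdF
  have hcefne : comp e f ≠ ∅ := by
    intro h
    apply hcehne
    exact Set.subset_empty_iff.mp (h ▸ comp_mono_right e Set.diff_subset)
  have hatom := atom_comp_atom hF heAtom hf hcefne
  have heq1 : comp e (f \ g) = comp e f :=
    hatom.2.2 _ hcehF hcehne (comp_mono_right e Set.diff_subset)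
  have hmemθf : ((⟨e, heAtom⟩ : {b // IsAtomOf F b}), (⟨comp e f, hatom⟩ : {b // IsAtomOf F b}))
      ∈ theta F f := rfl
  rw [hθ] at hmemθf
  have hceg : comp e g = comp e f := hmemθf
  have hthis := comp_inter_of_pf (hF.pf e heAtom.1) (f \ g) g
  rw [Set.diff_inter_self, comp_empty', heq1, ← hceg, Set.inter_self] at hthis
  exact hcefne (hceg.symm.trans hthis.symm)

theorem theta_comp {F : Set (Set (X × X))} (hF : IsPFAlgebra F) {f g : Set (X × X)}
    (hf : f ∈ F) (_hg : g ∈ F) : theta F (comp f g) = comp (theta F f) (theta F g) := by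
  ext ⟨a, c⟩
  constructor
  · intro hp
    have hp' : comp a.val (comp f g) = c.val := hp
    have h1 : comp a.val f ≠ ∅ := by
      intro h
      rw [← comp_assoc', h, empty_comp'] at hp'
      exact c.2.2.1 hp'.symm
    refine ⟨⟨comp a.val f, atom_comp_atom hF a.2 hf h1⟩, rfl, ?_⟩
    show comp (comp a.val f) g = c.val
    rw [comp_assoc']; exact hp'
  · rintro ⟨b, h1, h2⟩
    have h1' : comp a.val f = b.val := h1
    have h2' : comp b.val g = c.val := h2
    show comp a.val (comp f g) = c.val
    rw [← comp_assoc', h1', h2']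

theorem theta_inter {F : Set (Set (X × X))} (hF : IsPFAlgebra F) {f g : Set (X × X)}
    (hf : f ∈ F) (hg : g ∈ F) : theta F (f ∩ g) = theta F f ∩ theta F g := by
  ext ⟨a, b⟩
  have hPFa : IsPF a.val := hF.pf _ a.2.1
  constructor
  · intro hp
    have hp' : comp a.val (f ∩ g) = b.val := hp
    rw [comp_inter_of_pf hPFa] at hp'
    have hbf : b.val ⊆ comp a.val f := by rw [← hp']; exact Set.inter_subset_left
    have hbg : b.val ⊆ comp a.val g := by rw [← hp']; exact Set.inter_subset_right
    have hf1 : comp a.val f ≠ ∅ := fun h => b.2.2.1 (Set.subset_empty_iff.mp (h ▸ hbf))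
    have hg1 : comp a.val g ≠ ∅ := fun h => b.2.2.1 (Set.subset_empty_iff.mp (h ▸ hbg))
    constructor
    · show comp a.val f = b.val
      exact ((atom_comp_atom hF a.2 hf hf1).2.2 b.val b.2.1 b.2.2.1 hbf).symm
    · show comp a.val g = b.val
      exact ((atom_comp_atom hF a.2 hg hg1).2.2 b.val b.2.1 b.2.2.1 hbg).symm
  · rintro ⟨h1, h2⟩
    have h1' : comp a.val f = b.val := h1
    have h2' : comp a.val g = b.val := h2
    show comp a.val (f ∩ g) = b.val
    rw [comp_inter_of_pf hPFa, h1', h2', Set.inter_self]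

theorem theta_adom {F : Set (Set (X × X))} (hF : IsPFAlgebra F) {f : Set (X × X)}
    (hf : f ∈ F) : theta F (adom f) = adom (theta F f) := by
  ext ⟨a, b⟩
  constructor
  · intro hp
    have hp' : comp a.val (adom f) = b.val := hp
    have hne : comp a.val (adom f) ≠ ∅ := by
      intro h
      rw [h] at hp'
      exact b.2.2.1 hp'.symm
    have hba : b.val = a.val := by
      refine a.2.2.2 b.val b.2.1 b.2.2.1 ?_
      rw [← hp']
      exact comp_adom_subset a.val f
    have hcf : comp a.val f = ∅ := (atom_adom_iff hF a.2 hf).mp hne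
    refine ⟨?_, ?_⟩
    · show a = b
      exact (Subtype.ext hba).symm
    · intro c hc
      have hc' : comp a.val f = c.val := hc
      rw [hcf] at hc'
      exact c.2.2.1 hc'.symm
  · rintro ⟨h1, h2⟩
    have hab : a = b := h1
    have hcf : comp a.val f = ∅ := by
      by_contra h
      exact h2 ⟨comp a.val f, atom_comp_atom hF a.2 hf h⟩ rfl
    have hne := (atom_adom_iff hF a.2 hf).mpr hcf
    show comp a.val (adom f) = b.val
    rw [← hab]
    exact a.2.2.2 _ (hF.comp_mem _ a.2.1 _ (hF.adom_mem f hf)) hne (comp_adom_subset a.val f)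

theorem theta_join {F : Set (Set (X × X))} (hF : IsPFAlgebra F)
    (hD : CompLeftDistribJoins F) : JoinComplete F (theta F) := by
  intro S hS m hm
  apply Set.Subset.antisymm
  · rintro ⟨a, b⟩ hp
    have hp' : comp a.val m = b.val := hp
    have hlub := hD a.val a.2.1 S hS m hm
    by_cases hex : ∃ s ∈ S, comp a.val s ≠ ∅
    · obtain ⟨s, hs, hne⟩ := hex
      have hsub : comp a.val s ⊆ b.val := by
        rw [← hp']; exact comp_mono_right a.val (hm.2.1 s hs)
      have heq := b.2.2.2 _ (hF.comp_mem _ a.2.1 s (hS hs)) hne hsub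
      exact Set.mem_iUnion₂.mpr ⟨s, hs, heq⟩
    · exfalso
      push_neg at hex
      have hub : ∀ t ∈ (fun s => comp a.val s) '' S, t ⊆ (∅ : Set (X × X)) := by
        rintro t ⟨s, hs, rfl⟩
        show comp a.val s ⊆ ∅
        rw [hex s hs]
      have hle := hlub.2.2 ∅ (empty_mem hF) hub
      rw [hp'] at hle
      exact b.2.2.1 (Set.subset_empty_iff.mp hle)
  · intro p hp
    obtain ⟨s, hs, hps⟩ := Set.mem_iUnion₂.mp hp
    exact theta_mono hF hm.1 (hm.2.1 s hs) hps

theorem theta_meet {F : Set (Set (X × X))} (hF : IsPFAlgebra F)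
    (hD : CompLeftDistribJoins F) : MeetComplete F (theta F) := by
  intro S hS hSne m hm
  obtain ⟨s₀, hs₀⟩ := hSne
  apply Set.Subset.antisymm
  · intro p hp
    apply Set.mem_iInter₂.mpr
    intro s hs
    exact theta_mono hF (hS hs) (hm.2.1 s hs) hp
  · rintro ⟨a, b⟩ hp
    have hps : ∀ s ∈ S, comp a.val s = b.val := fun s hs => Set.mem_iInter₂.mp hp s hs
    have hmF := hm.1
    have hm'F : s₀ \ m ∈ F := diff_mem hF (hS hs₀) hmF
    have hT'sub : (fun s => s₀ \ s) '' S ⊆ F := by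
      rintro t ⟨s, hs, rfl⟩
      exact diff_mem hF (hS hs₀) (hS hs)
    have hlubT' : IsLUBIn F ((fun s => s₀ \ s) '' S) (s₀ \ m) := by
      refine ⟨hm'F, ?_, ?_⟩
      · rintro t ⟨s, hs, rfl⟩
        exact Set.diff_subset_diff_right (hm.2.1 s hs)
      · intro c hc hcub
        have hc'F : c ∩ s₀ ∈ F := hF.inter_mem c hc s₀ (hS hs₀)
        have h1 : s₀ \ (c ∩ s₀) ⊆ m := by
          apply hm.2.2 _ (diff_mem hF (hS hs₀) hc'F)
          intro s hs q hq
          by_contra hqs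
          have hq1 : q ∈ s₀ \ s := ⟨hq.1, hqs⟩
          have hq2 := hcub _ ⟨s, hs, rfl⟩ hq1
          exact hq.2 ⟨hq2, hq.1⟩
        intro q hq
        by_contra hqc
        exact hq.2 (h1 ⟨hq.1, fun h => hqc h.1⟩)
    have hml := hD a.val a.2.1 _ hT'sub _ hlubT'
    have hzero : ∀ t ∈ (fun s => comp a.val s) '' ((fun s => s₀ \ s) '' S),
        t ⊆ (∅ : Set (X × X)) := by
      rintro t ⟨u, ⟨s, hs, rfl⟩, rfl⟩
      intro q hq
      have hq1 : q ∈ comp a.val s₀ := comp_mono_right a.val Set.diff_subset hq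
      have hq2 : q ∈ comp a.val s := by rw [hps s hs, ← hps s₀ hs₀]; exact hq1
      have hdisj := comp_inter_of_pf (hF.pf _ a.2.1) (s₀ \ s) s
      rw [Set.diff_inter_self, comp_empty'] at hdisj
      have hmem : q ∈ comp a.val (s₀ \ s) ∩ comp a.val s := ⟨hq, hq2⟩
      rw [← hdisj] at hmem
      exact hmem
    have hzero' : comp a.val (s₀ \ m) = ∅ :=
      Set.subset_empty_iff.mp (hml.2.2 ∅ (empty_mem hF) hzero)
    show comp a.val m = b.val
    apply Set.Subset.antisymm
    · rw [← hps s₀ hs₀]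
      exact comp_mono_right a.val (hm.2.1 s₀ hs₀)
    · rintro ⟨x, z⟩ hxz
      rw [← hps s₀ hs₀] at hxz
      obtain ⟨y, hxy, hyz⟩ := hxz
      have hym : (y, z) ∈ m := by
        by_contra h
        have hmem : (x, z) ∈ comp a.val (s₀ \ m) := ⟨y, hxy, hyz, h⟩
        rw [hzero'] at hmem
        exact hmem
      exact ⟨y, hxy, hym⟩

theorem rep_backward {X : Type u} {F : Set (Set (X × X))} (hF : IsPFAlgebra F)
    (hAt : Atomic F) (hD : CompLeftDistribJoins F) :
    ∃ (Y : Type u) (θ : Set (X × X) → Set (Y × Y)),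
      IsRep F θ ∧ MeetComplete F θ ∧ JoinComplete F θ := by
  refine ⟨{b : Set (X × X) // IsAtomOf F b}, theta F, ⟨?_, ?_, ?_, ?_, ?_⟩,
    theta_meet hF hD, theta_join hF hD⟩
  · intro f hf g hg h
    have h1 := theta_inj_half hF hAt hf hg h
    have h2 := theta_inj_half hF hAt hg hf h.symm
    exact Set.Subset.antisymm (Set.diff_eq_empty.mp h1) (Set.diff_eq_empty.mp h2)
  · intro f hf x y z h1 h2
    have h1' : comp x.val f = y.val := h1
    have h2' : comp x.val f = z.val := h2
    exact Subtype.ext (h1'.symm.trans h2')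
  · intro f hf g hg
    exact theta_comp hF hf hg
  · intro f hf g hg
    exact theta_inter hF hf hg
  · intro f hf
    exact theta_adom hF hf

end PFAlg



open PFAlg in
/-- an algebra of partial functions admits a complete representation by
partial functions iff it is atomic and composition is completely left-distributive over
joins. -/
theorem stmt18 {X : Type u} (F : Set (Set (X × X))) (hF : IsPFAlgebra F) :
    (∃ (Y : Type u) (θ : Set (X × X) → Set (Y × Y)),
        IsRep F θ ∧ MeetComplete F θ ∧ JoinComplete F θ) ↔
      (Atomic F ∧ CompLeftDistribJoins F) := by
  constructor
  · rintro ⟨Y, θ, hrep, -, hjoin⟩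
    exact rep_forward hF θ hrep hjoin
  · rintro ⟨hAt, hD⟩
    exact rep_backward hF hAt hD
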